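/- Let p be an odd prime and m = (p-1)/2. Suppose we are given m elements d_1, d_2, ..., d_m of F_p^*. Then there exist 2m pairwise distinct elements x_1, ..., x_m, y_1, ..., y_m of F_p^* such that y_i - x_i = d_i for every i = 1, ..., m. (Equivalently, the nonzero elements of F_p can be partitioned into pairs whose differences are exactly the prescribed values d_1, ..., d_m.) -/

import Mathlib

open Finset MvPolynomial

namespace PartitionFpAux

variable {m p : ℕ}

/-- The set of ordered pairs `(i, j)` with `i < j`. -/
def U (m : ℕ) : Finset (Fin m × Fin m) := Finset.univ.filter fun q => q.1 < q.2

/-- Index set for the linear factors of the auxiliary polynomial. -/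
def S (m : ℕ) : Finset ((Fin m × Bool) ⊕ ((Fin m × Fin m) × Fin 4)) :=
  (Finset.univ : Finset (Fin m × Bool)).disjSum ((U m) ×ˢ (Finset.univ : Finset (Fin 4)))

/-- The homogeneous (degree 1) part of each linear factor. -/
noncomputable def lin (p : ℕ) : (Fin m × Bool) ⊕ ((Fin m × Fin m) × Fin 4) → MvPolynomial (Fin m) (ZMod p) :=
  Sum.elim (fun q => X q.1) (fun q => X q.1.1 - X q.1.2)

/-- The constant part of each linear factor. -/
def cst (d : Fin m → ZMod p) : (Fin m × Bool) ⊕ ((Fin m × Fin m) × Fin 4) → ZMod p :=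
  Sum.elim (fun q => cond q.2 (d q.1) 0)
    (fun q => if q.2 = 0 then 0 else if q.2 = 1 then d q.1.1 - d q.1.2
              else if q.2 = 2 then d q.1.1 else - d q.1.2)

/-- The auxiliary polynomial. -/
noncomputable def P (d : Fin m → ZMod p) : MvPolynomial (Fin m) (ZMod p) :=
  ∏ t ∈ S m, (lin p t + C (cst d t))

lemma two_mul_cardU : 2 * (U m).card = m * m - m := by
  classical
  have hswap : ((Finset.univ : Finset (Fin m × Fin m)).filter fun q => q.2 < q.1).card
      = (U m).card := by
    apply Finset.card_bij (fun q _ => Prod.swap q)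
    · intro q hq
      rw [Finset.mem_filter] at hq
      rw [U, Finset.mem_filter]
      exact ⟨Finset.mem_univ _, hq.2⟩
    · intro q _ q' _ h
      exact Prod.swap_injective h
    · intro q hq
      refine ⟨Prod.swap q, ?_, by simp⟩
      rw [U, Finset.mem_filter] at hq
      rw [Finset.mem_filter]
      exact ⟨Finset.mem_univ _, hq.2⟩
  have hunion : (Finset.univ : Finset (Fin m)).offDiag
      = (U m) ∪ ((Finset.univ : Finset (Fin m × Fin m)).filter fun q => q.2 < q.1) := by
    ext q
    rw [Finset.mem_offDiag, Finset.mem_union, U, Finset.mem_filter, Finset.mem_filter]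
    constructor
    · rintro ⟨-, -, h⟩
      rcases lt_or_gt_of_ne h with h' | h'
      · exact Or.inl ⟨Finset.mem_univ _, h'⟩
      · exact Or.inr ⟨Finset.mem_univ _, h'⟩
    · rintro (⟨-, h⟩ | ⟨-, h⟩)
      · exact ⟨Finset.mem_univ _, Finset.mem_univ _, ne_of_lt h⟩
      · exact ⟨Finset.mem_univ _, Finset.mem_univ _, (ne_of_lt h).symm⟩
  have hdisj : Disjoint (U m)
      ((Finset.univ : Finset (Fin m × Fin m)).filter fun q => q.2 < q.1) := by
    rw [Finset.disjoint_left]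
    intro q hq hq'
    simp only [U, Finset.mem_filter, Finset.mem_univ, true_and] at hq hq'
    exact absurd hq' (not_lt.mpr hq.le)
  have hcard := Finset.offDiag_card (Finset.univ : Finset (Fin m))
  rw [hunion, Finset.card_union_of_disjoint hdisj, hswap, Finset.card_univ,
    Fintype.card_fin] at hcard
  omega

lemma cardS (hp2 : p = 2 * m + 1) : (S m).card = m * (p - 1) := by
  have h1 : (S m).card = 2 * m + (U m).card * 4 := by
    simp only [S, Finset.card_disjSum, Finset.card_product, Finset.card_univ,
      Fintype.card_prod, Fintype.card_fin, Fintype.card_bool]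
    ring
  have h2 := two_mul_cardU (m := m)
  have hmm : m ≤ m * m := by
    rcases Nat.eq_zero_or_pos m with rfl | h
    · simp
    · exact Nat.le_mul_of_pos_left m h
  have hgoal : m * (p - 1) = 2 * (m * m) := by
    subst hp2
    have : 2 * m + 1 - 1 = 2 * m := by omega
    rw [this]; ring
  rw [hgoal]
  omega

/-- Key general lemma: the coefficient of a top-degree monomial in a product of
affine factors only depends on the homogeneous parts. -/
lemma coeff_prod_affine {ι σT R : Type*} [CommRing R] [DecidableEq σT]
    (s : Finset ι) (g : ι → MvPolynomial σT R) (c : ι → R)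
    (hg : ∀ t ∈ s, ∀ u : σT →₀ ℕ, coeff u (g t) ≠ 0 → (u.sum fun _ n => n) = 1)
    (M : σT →₀ ℕ) (hM : (M.sum fun _ n => n) = s.card) :
    coeff M (∏ t ∈ s, (g t + C (c t))) = coeff M (∏ t ∈ s, g t) := by
  classical
  induction s using Finset.cons_induction generalizing M with
  | empty => simp
  | cons a s ha ih =>
    rw [Finset.prod_cons, Finset.prod_cons, add_mul, coeff_add, coeff_C_mul]
    have hg' : ∀ t ∈ s, ∀ u : σT →₀ ℕ, coeff u (g t) ≠ 0 → (u.sum fun _ n => n) = 1 :=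
      fun t ht => hg t (Finset.mem_cons_of_mem ht)
    have hdeg : (∏ t ∈ s, (g t + C (c t))).totalDegree ≤ s.card := by
      refine (totalDegree_finset_prod _ _).trans ?_
      have h1 : ∀ t ∈ s, (g t + C (c t)).totalDegree ≤ 1 := by
        intro t ht
        refine (totalDegree_add _ _).trans ?_
        rw [max_le_iff]
        constructor
        · exact Finset.sup_le fun b hb =>
            le_of_eq (hg' t ht b (mem_support_iff.mp hb))
        · simp [totalDegree_C]
      have hb := Finset.sum_le_card_nsmul s (fun t => (g t + C (c t)).totalDegree) 1 h1
      simpa using hb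
    have hzero : coeff M (∏ t ∈ s, (g t + C (c t))) = 0 := by
      apply coeff_eq_zero_of_totalDegree_lt
      refine lt_of_le_of_lt hdeg ?_
      have : (M.sum fun _ n => n) = ∑ i ∈ M.support, M i := rfl
      rw [← this, hM, Finset.card_cons]
      omega
    rw [hzero, mul_zero, add_zero, coeff_mul, coeff_mul]
    refine Finset.sum_congr rfl ?_
    rintro ⟨u, v⟩ huv
    rw [Finset.HasAntidiagonal.mem_antidiagonal] at huv
    by_cases h0 : coeff u (g a) = 0
    · simp [h0]
    · have hu : (u.sum fun _ n => n) = 1 := hg a (Finset.mem_cons_self _ _) u h0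
      have hv : (v.sum fun _ n => n) = s.card := by
        have hadd : ((u + v).sum fun _ n => n)
            = (u.sum fun _ n => n) + (v.sum fun _ n => n) :=
          Finsupp.sum_add_index' (fun _ => rfl) (fun _ _ _ => rfl)
        rw [huv, hM, Finset.card_cons] at hadd
        omega
      rw [ih hg' v hv]

lemma hg_lin : ∀ t ∈ S m, ∀ u : Fin m →₀ ℕ,
    coeff u (lin p t) ≠ 0 → (u.sum fun _ n => n) = 1 := by
  classical
  intro t _ u hu
  have hX : ∀ i : Fin m, coeff u (X i : MvPolynomial (Fin m) (ZMod p)) ≠ 0 →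
      (u.sum fun _ n => n) = 1 := by
    intro i h
    rw [coeff_X'] at h
    split at h
    · rename_i heq
      rw [← heq]
      rw [Finsupp.sum_single_index rfl]
    · exact absurd rfl h
  cases t with
  | inl q => exact hX q.1 hu
  | inr q =>
    simp only [lin, Sum.elim_inr, coeff_sub] at hu
    by_cases h1 : coeff u (X q.1.1 : MvPolynomial (Fin m) (ZMod p)) = 0
    · rw [h1, zero_sub, neg_ne_zero] at hu
      exact hX _ hu
    · exact hX _ h1

lemma totalDegree_P_le (d : Fin m → ZMod p) : (P d).totalDegree ≤ (S m).card := by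
  refine (totalDegree_finset_prod _ _).trans ?_
  have h1 : ∀ t ∈ S m, (lin p t + C (cst d t)).totalDegree ≤ 1 := by
    intro t ht
    refine (totalDegree_add _ _).trans ?_
    rw [max_le_iff]
    constructor
    · exact Finset.sup_le fun b hb =>
        le_of_eq (hg_lin t ht b (mem_support_iff.mp hb))
    · simp [totalDegree_C]
  have hb := Finset.sum_le_card_nsmul (S m) (fun t => (lin p t + C (cst d t)).totalDegree) 1 h1
  simpa using hb

/-- The target exponent: every variable appears with exponent `p - 1`. -/
noncomputable def Mexp (m p : ℕ) : Fin m →₀ ℕ := Finsupp.equivFunOnFinite.symm fun _ => p - 1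

lemma Mexp_apply (i : Fin m) : Mexp m p i = p - 1 := rfl

lemma Mexp_sum : ((Mexp m p).sum fun _ n => n) = m * (p - 1) := by
  rw [Finsupp.sum_fintype _ _ fun _ => rfl]
  simp [Mexp_apply, Finset.sum_const, Finset.card_univ, mul_comm]

lemma sum_pow_card_sub_one [hp : Fact p.Prime] :
    ∑ t : ZMod p, t ^ (p - 1) = -1 := by
  classical
  have hp2 := hp.out.two_le
  have h1 : ∑ t : ZMod p, t ^ (p - 1)
      = ∑ t ∈ Finset.univ.filter (fun t : ZMod p => t ≠ 0), 1 := by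
    rw [Finset.sum_filter]
    refine Finset.sum_congr rfl fun t _ => ?_
    by_cases ht : t = 0
    · subst ht
      rw [zero_pow (by omega), if_neg (by simp)]
    · rw [ZMod.pow_card_sub_one_eq_one ht, if_pos ht]
  rw [h1, Finset.sum_const, nsmul_eq_mul, mul_one]
  rw [Finset.filter_ne', Finset.card_erase_of_mem (Finset.mem_univ _), Finset.card_univ,
    ZMod.card]
  rw [Nat.cast_sub hp.out.one_lt.le, ZMod.natCast_self, Nat.cast_one, zero_sub]

/-- The key identity: summing a polynomial of total degree at most `m * (p-1)` over all
points gives `(-1)^m` times the top coefficient. -/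
lemma sum_eval [hp : Fact p.Prime] (f : MvPolynomial (Fin m) (ZMod p))
    (hf : f.totalDegree ≤ m * (p - 1)) :
    ∑ a : Fin m → ZMod p, eval a f = (-1) ^ m * coeff (Mexp m p) f := by
  classical
  have h1 : ∑ a : Fin m → ZMod p, eval a f
      = ∑ d ∈ f.support, coeff d f * ∏ i, (∑ t : ZMod p, t ^ d i) := by
    simp_rw [eval_eq']
    rw [Finset.sum_comm]
    refine Finset.sum_congr rfl fun d _ => ?_
    rw [← Finset.mul_sum]
    congr 1
    rw [Finset.prod_univ_sum, Fintype.piFinset_univ]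
  have hterm : ∀ d ∈ f.support, d ≠ Mexp m p →
      (∏ i, (∑ t : ZMod p, t ^ d i)) = 0 := by
    intro d hd hne
    have hex : ∃ i, d i < p - 1 := by
      by_contra hc
      push_neg at hc
      apply hne
      have hsum : ∑ i, d i ≤ m * (p - 1) := by
        have hle := le_totalDegree hd
        have heq : (d.sum fun _ n => n) = ∑ i, d i :=
          Finsupp.sum_fintype _ _ fun _ => rfl
        have : (d.sum fun _ n => n) ≤ f.totalDegree := hle
        omega
      have hall : ∀ i, d i = p - 1 := by
        intro i
        by_contra hne2
        have hlt : p - 1 < d i := lt_of_le_of_ne (hc i) (Ne.symm hne2)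
        have : m * (p - 1) < ∑ j, d j := by
          calc m * (p - 1) = ∑ _j : Fin m, (p - 1) := by
                simp [Finset.sum_const, Finset.card_univ, mul_comm]
            _ < ∑ j, d j := Finset.sum_lt_sum (fun j _ => hc j) ⟨i, Finset.mem_univ i, hlt⟩
        omega
      ext i
      rw [hall i, Mexp_apply]
    obtain ⟨i, hi⟩ := hex
    apply Finset.prod_eq_zero (Finset.mem_univ i)
    exact FiniteField.sum_pow_lt_card_sub_one (K := ZMod p) (d i)
      (by rw [ZMod.card]; exact hi)
  have hMval : (∏ i : Fin m, (∑ t : ZMod p, t ^ (Mexp m p i))) = (-1) ^ m := by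
    simp only [Mexp_apply]
    rw [Finset.prod_congr rfl fun i _ => sum_pow_card_sub_one]
    simp
  rw [h1]
  by_cases hM : Mexp m p ∈ f.support
  · rw [Finset.sum_eq_single_of_mem _ hM]
    · rw [hMval]; ring
    · intro d hd hne
      rw [hterm d hd hne, mul_zero]
  · rw [Finset.sum_eq_zero, notMem_support_iff.mp hM, mul_zero]
    intro d hd
    have hne : d ≠ Mexp m p := fun h => hM (h ▸ hd)
    rw [hterm d hd hne, mul_zero]

lemma eval_P (d : Fin m → ZMod p) (a : Fin m → ZMod p) :
    eval a (P d) = (∏ i, a i * (a i + d i)) *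
      ∏ q ∈ U m, ((a q.1 - a q.2) * ((a q.1 + d q.1) - (a q.2 + d q.2)) *
        ((a q.1 + d q.1) - a q.2) * (a q.1 - (a q.2 + d q.2))) := by
  rw [P, map_prod, S, Finset.prod_disjSum]
  congr 1
  · rw [Fintype.prod_prod_type]
    refine Finset.prod_congr rfl fun i _ => ?_
    rw [Fintype.prod_bool]
    simp [lin, cst]
    ring
  · rw [Finset.prod_product]
    refine Finset.prod_congr rfl fun q _ => ?_
    rw [Fin.prod_univ_four]
    simp [lin, cst]
    ring

/-- The "good configuration" predicate extracted from nonvanishing of `P`. -/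
def Good (d : Fin m → ZMod p) (a : Fin m → ZMod p) : Prop :=
  (∀ i, a i ≠ 0 ∧ a i + d i ≠ 0) ∧
  ∀ q ∈ U m, a q.1 ≠ a q.2 ∧ a q.1 + d q.1 ≠ a q.2 + d q.2 ∧
    a q.1 + d q.1 ≠ a q.2 ∧ a q.1 ≠ a q.2 + d q.2

lemma eval_ne_zero_iff [hp : Fact p.Prime] (d a : Fin m → ZMod p) :
    eval a (P d) ≠ 0 ↔ Good d a := by
  rw [eval_P, Good, mul_ne_zero_iff, Finset.prod_ne_zero_iff, Finset.prod_ne_zero_iff]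
  simp only [mul_ne_zero_iff, Finset.mem_univ, forall_true_left, sub_ne_zero]
  constructor
  · rintro ⟨h1, h2⟩
    refine ⟨fun i => h1 i, fun q hq => ?_⟩
    obtain ⟨⟨⟨hA, hB⟩, hC⟩, hD⟩ := h2 q hq
    exact ⟨hA, hB, hC, hD⟩
  · rintro ⟨h1, h2⟩
    refine ⟨fun i => h1 i, fun q hq => ?_⟩
    obtain ⟨hA, hB, hC, hD⟩ := h2 q hq
    exact ⟨⟨⟨hA, hB⟩, hC⟩, hD⟩

section Main

variable [hpf : Fact p.Prime]

/-- The reference solution for `d ≡ 1` : the odd residues. -/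
def astar (m p : ℕ) : Fin m → ZMod p := fun i => ((2 * i.val + 1 : ℕ) : ZMod p)

lemma cast_ne_zero' (hp2 : p = 2 * m + 1) {j : ℕ} (h1 : 0 < j) (h2 : j ≤ 2 * m) :
    (j : ZMod p) ≠ 0 := by
  rw [Ne, ZMod.natCast_eq_zero_iff]
  intro hdvd
  have := Nat.le_of_dvd h1 hdvd
  omega

lemma cast_inj' {x y : ℕ} (hx : x < p) (hy : y < p) (h : (x : ZMod p) = y) : x = y := by
  have h2 := congrArg ZMod.val h
  rwa [ZMod.val_cast_of_lt hx, ZMod.val_cast_of_lt hy] at h2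

lemma good_astar (hp2 : p = 2 * m + 1) :
    (∀ i : Fin m, astar m p i ≠ 0 ∧ astar m p i + 1 ≠ 0) ∧
    (∀ i j : Fin m, i ≠ j → astar m p i ≠ astar m p j ∧ astar m p i + 1 ≠ astar m p j) := by
  have hcast1 : ∀ i : Fin m, astar m p i + 1 = ((2 * i.val + 2 : ℕ) : ZMod p) := by
    intro i
    simp only [astar]
    push_cast
    ring
  constructor
  · intro i
    have hi := i.isLt
    exact ⟨cast_ne_zero' hp2 (by omega) (by omega),
      by rw [hcast1]; exact cast_ne_zero' hp2 (by omega) (by omega)⟩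
  · intro i j hij
    have hi := i.isLt
    have hj := j.isLt
    constructor
    · intro h
      have := cast_inj' (p := p) (by omega) (by omega) h
      exact hij (Fin.ext (by omega))
    · rw [hcast1]
      intro h
      have := cast_inj' (p := p) (by omega) (by omega) h
      omega

lemma good_one_comp (hp2 : p = 2 * m + 1) (σ : Equiv.Perm (Fin m)) :
    Good (fun _ => (1 : ZMod p)) (astar m p ∘ σ) := by
  obtain ⟨h1, h2⟩ := good_astar (m := m) hp2
  refine ⟨fun i => h1 (σ i), ?_⟩
  intro q hq
  have hq' : q.1 < q.2 := by
    simpa [U] using hq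
  have hne : σ q.1 ≠ σ q.2 := fun h => (ne_of_lt hq') (σ.injective h)
  refine ⟨(h2 _ _ hne).1, ?_, (h2 _ _ hne).2, ?_⟩
  · intro h
    exact (h2 _ _ hne).1 (add_right_cancel h)
  · intro h
    exact (h2 _ _ hne.symm).2 h.symm

lemma good_one_to_perm (hp2 : p = 2 * m + 1) {a : Fin m → ZMod p}
    (hG : Good (fun _ => (1 : ZMod p)) a) :
    ∃ σ : Equiv.Perm (Fin m), a = astar m p ∘ σ := by
  classical
  obtain ⟨h1, h2⟩ := hG
  have hmemU : ∀ i j : Fin m, i < j → (i, j) ∈ U m := by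
    intro i j h
    simp [U, h]
  have hne : ∀ i j, i ≠ j → a i ≠ a j := by
    intro i j hij
    rcases lt_or_gt_of_ne hij with h | h
    · exact (h2 (i, j) (hmemU _ _ h)).1
    · exact fun he => (h2 (j, i) (hmemU _ _ h)).1 he.symm
  have hne2 : ∀ i j, a i ≠ a j + 1 := by
    intro i j
    rcases lt_trichotomy i j with h | rfl | h
    · exact (h2 (i, j) (hmemU _ _ h)).2.2.2
    · intro heq
      have : (1 : ZMod p) = 0 := by
        have := left_eq_add.mp heq
        exact this
      exact one_ne_zero this
    · intro he
      exact (h2 (j, i) (hmemU _ _ h)).2.2.1 he.symm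
  set A := Finset.image a Finset.univ with hA
  set B := Finset.image (fun i => a i + 1) Finset.univ with hB
  have hinj : Function.Injective a := fun i j h =>
    by_contra fun hne' => hne i j hne' h
  have hinj1 : Function.Injective (fun i => a i + 1) := fun i j h =>
    hinj (add_right_cancel h)
  have hcardA : A.card = m := by
    rw [hA, Finset.card_image_of_injective _ hinj, Finset.card_univ, Fintype.card_fin]
  have hcardB : B.card = m := by
    rw [hB, Finset.card_image_of_injective _ hinj1, Finset.card_univ, Fintype.card_fin]
  have hdisj : Disjoint A B := by
    rw [Finset.disjoint_left]
    rintro v hv hv'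
    rw [hA, Finset.mem_image] at hv
    rw [hB, Finset.mem_image] at hv'
    obtain ⟨i, -, hi⟩ := hv
    obtain ⟨j, -, hj⟩ := hv'
    exact hne2 i j (hi.symm ▸ hj.symm ▸ rfl)
  have hsub : A ∪ B ⊆ (Finset.univ : Finset (ZMod p)).erase 0 := by
    intro v hv
    rw [Finset.mem_erase]
    refine ⟨?_, Finset.mem_univ _⟩
    rcases Finset.mem_union.mp hv with h | h
    · rw [hA, Finset.mem_image] at h
      obtain ⟨i, -, hi⟩ := h
      exact hi ▸ (h1 i).1
    · rw [hB, Finset.mem_image] at h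
      obtain ⟨i, -, hi⟩ := h
      exact hi ▸ (h1 i).2
  have hcardE : ((Finset.univ : Finset (ZMod p)).erase 0).card = 2 * m := by
    rw [Finset.card_erase_of_mem (Finset.mem_univ _), Finset.card_univ, ZMod.card]
    omega
  have hunion : A ∪ B = (Finset.univ : Finset (ZMod p)).erase 0 := by
    apply Finset.eq_of_subset_of_card_le hsub
    rw [Finset.card_union_of_disjoint hdisj, hcardA, hcardB, hcardE]
    omega
  have claim : ∀ n : ℕ, n < m →
      ((2 * n + 1 : ℕ) : ZMod p) ∈ A ∧ ((2 * n + 2 : ℕ) : ZMod p) ∈ B := by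
    intro n
    induction n using Nat.strong_induction_on with
    | _ n ih =>
      intro hn
      have hmem : ∀ j : ℕ, 0 < j → j ≤ 2 * m → ((j : ℕ) : ZMod p) ∈ A ∪ B := by
        intro j hj1 hj2
        rw [hunion, Finset.mem_erase]
        exact ⟨cast_ne_zero' hp2 hj1 hj2, Finset.mem_univ _⟩
      have hstep1 : ((2 * n + 1 : ℕ) : ZMod p) ∈ A := by
        rcases Finset.mem_union.mp (hmem (2 * n + 1) (by omega) (by omega)) with h | h
        · exact h
        · exfalso
          rw [hB, Finset.mem_image] at h
          obtain ⟨j, -, hj⟩ := h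
          have haj : a j = ((2 * n : ℕ) : ZMod p) := by
            have hc : ((2 * n + 1 : ℕ) : ZMod p) = ((2 * n : ℕ) : ZMod p) + 1 := by
              push_cast; ring
            rw [hc] at hj
            exact add_right_cancel hj
          rcases Nat.eq_zero_or_pos n with rfl | hpos
          · apply (h1 j).1
            simpa using haj
          · have h2n : ((2 * n : ℕ) : ZMod p) ∈ B := by
              have hB2 := (ih (n - 1) (by omega) (by omega)).2
              have heq : 2 * (n - 1) + 2 = 2 * n := by omega
              rwa [heq] at hB2
            have hjA : a j ∈ A := by
              rw [hA]
              exact Finset.mem_image_of_mem a (Finset.mem_univ j)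
            exact Finset.disjoint_left.mp hdisj hjA (haj ▸ h2n)
      have hstep2 : ((2 * n + 2 : ℕ) : ZMod p) ∈ B := by
        rcases Finset.mem_union.mp (hmem (2 * n + 2) (by omega) (by omega)) with h | h
        · exfalso
          rw [hA, Finset.mem_image] at h
          obtain ⟨j, -, hj⟩ := h
          rw [hA, Finset.mem_image] at hstep1
          obtain ⟨i, -, hi⟩ := hstep1
          apply hne2 j i
          rw [hj, hi]
          push_cast
          ring
        · exact h
      exact ⟨hstep1, hstep2⟩
  have hastar_inj : Function.Injective (astar m p) := by
    intro i j h
    have hi := i.isLt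
    have hj := j.isLt
    have := cast_inj' (p := p) (x := 2 * i.val + 1) (y := 2 * j.val + 1)
      (by omega) (by omega) h
    exact Fin.ext (by omega)
  have hsubA : Finset.image (astar m p) Finset.univ ⊆ A := by
    intro v hv
    obtain ⟨i, -, hi⟩ := Finset.mem_image.mp hv
    exact hi ▸ (claim i.val i.isLt).1
  have hAeq : Finset.image (astar m p) Finset.univ = A := by
    apply Finset.eq_of_subset_of_card_le hsubA
    rw [hcardA, Finset.card_image_of_injective _ hastar_inj, Finset.card_univ,
      Fintype.card_fin]
  have hexists : ∀ i : Fin m, ∃ j : Fin m, astar m p j = a i := by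
    intro i
    have hmA : a i ∈ A := by
      rw [hA]
      exact Finset.mem_image_of_mem a (Finset.mem_univ i)
    rw [← hAeq] at hmA
    obtain ⟨j, -, hj⟩ := Finset.mem_image.mp hmA
    exact ⟨j, hj⟩
  choose σf hσf using hexists
  have hσinj : Function.Injective σf := by
    intro i j h
    apply hinj
    rw [← hσf i, ← hσf j, h]
  have hbij := Finite.injective_iff_bijective.mp hσinj
  refine ⟨Equiv.ofBijective σf hbij, ?_⟩
  funext i
  exact (hσf i).symm

/-- The even function giving the pair factors for `d ≡ 1`. -/
def gfun (p : ℕ) (t : ZMod p) : ZMod p := t * t * (t + 1) * (t - 1)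

lemma gfun_neg (t : ZMod p) : gfun p (-t) = gfun p t := by
  unfold gfun
  ring

lemma eval_comp_perm (a : Fin m → ZMod p) (σ : Equiv.Perm (Fin m)) :
    eval (a ∘ σ) (P (fun _ => (1 : ZMod p))) = eval a (P fun _ => (1 : ZMod p)) := by
  rw [eval_P, eval_P]
  have hg : ∀ b : Fin m → ZMod p,
      (∏ q ∈ U m, ((b q.1 - b q.2) * ((b q.1 + 1) - (b q.2 + 1)) *
        ((b q.1 + 1) - b q.2) * (b q.1 - (b q.2 + 1))))
      = ∏ q ∈ U m, gfun p (b q.1 - b q.2) := by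
    intro b
    refine Finset.prod_congr rfl fun q _ => ?_
    unfold gfun
    ring
  congr 1
  · exact Equiv.prod_comp σ (fun i => a i * (a i + 1))
  · rw [hg, hg]
    have hUmem : ∀ q : Fin m × Fin m, q ∈ U m ↔ q.1 < q.2 := by
      intro q; simp [U]
    refine Finset.prod_nbij'
      (fun q => if σ q.1 < σ q.2 then (σ q.1, σ q.2) else (σ q.2, σ q.1))
      (fun q => if σ.symm q.1 < σ.symm q.2 then (σ.symm q.1, σ.symm q.2)
        else (σ.symm q.2, σ.symm q.1)) ?_ ?_ ?_ ?_ ?_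
    · intro q hq
      rw [hUmem] at hq ⊢
      by_cases h : σ q.1 < σ q.2
      · rw [if_pos h]; exact h
      · rw [if_neg h]
        have hne : σ q.1 ≠ σ q.2 := fun he => (ne_of_lt hq) (σ.injective he)
        exact lt_of_le_of_ne (not_lt.mp h) hne.symm
    · intro q hq
      rw [hUmem] at hq ⊢
      by_cases h : σ.symm q.1 < σ.symm q.2
      · rw [if_pos h]; exact h
      · rw [if_neg h]
        have hne : σ.symm q.1 ≠ σ.symm q.2 := fun he => (ne_of_lt hq) (σ.symm.injective he)
        exact lt_of_le_of_ne (not_lt.mp h) hne.symm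
    · intro q hq
      rw [hUmem] at hq
      by_cases h : σ q.1 < σ q.2
      · rw [if_pos h]
        simp only [Equiv.symm_apply_apply]
        rw [if_pos hq]
      · rw [if_neg h]
        simp only [Equiv.symm_apply_apply]
        rw [if_neg (not_lt.mpr hq.le)]
    · intro q hq
      rw [hUmem] at hq
      by_cases h : σ.symm q.1 < σ.symm q.2
      · rw [if_pos h]
        simp only [Equiv.apply_symm_apply]
        rw [if_pos hq]
      · rw [if_neg h]
        simp only [Equiv.apply_symm_apply]
        rw [if_neg (not_lt.mpr hq.le)]
    · intro q _
      dsimp only [Function.comp_apply]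
      by_cases h : σ q.1 < σ q.2
      · rw [if_pos h]
      · rw [if_neg h]
        rw [← gfun_neg (a (σ q.2) - a (σ q.1)), neg_sub]
  
lemma astar_injective (hp2 : p = 2 * m + 1) : Function.Injective (astar m p) := by
  intro x y hxy
  have hx := x.isLt
  have hy := y.isLt
  have := cast_inj' (p := p) (x := 2 * x.val + 1) (y := 2 * y.val + 1)
    (by omega) (by omega) hxy
  exact Fin.ext (by omega)

lemma sum_eval_one (hp2 : p = 2 * m + 1) :
    ∑ a : Fin m → ZMod p, eval a (P (fun _ => (1 : ZMod p)))
      = (m.factorial : ZMod p) * eval (astar m p) (P fun _ => (1 : ZMod p)) := by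
  classical
  set T := Finset.image (fun σ : Equiv.Perm (Fin m) => astar m p ∘ σ) Finset.univ with hT
  have hsub : T ⊆ Finset.univ := Finset.subset_univ T
  have hvan : ∀ a ∈ (Finset.univ : Finset (Fin m → ZMod p)), a ∉ T →
      eval a (P (fun _ => (1 : ZMod p))) = 0 := by
    intro a _ haT
    by_contra h0
    obtain ⟨σ, hσ⟩ := good_one_to_perm hp2 ((eval_ne_zero_iff _ _).mp h0)
    apply haT
    rw [hT, hσ]
    exact Finset.mem_image_of_mem _ (Finset.mem_univ σ)
  have hinjT : ∀ σ ∈ (Finset.univ : Finset (Equiv.Perm (Fin m))),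
      ∀ τ ∈ (Finset.univ : Finset (Equiv.Perm (Fin m))),
      astar m p ∘ σ = astar m p ∘ τ → σ = τ := by
    intro σ _ τ _ h
    ext i
    have hcong := congrFun h i
    have := astar_injective hp2 hcong
    exact congrArg Fin.val this
  rw [← Finset.sum_subset hsub hvan, hT, Finset.sum_image hinjT]
  rw [Finset.sum_congr rfl fun σ _ => eval_comp_perm (astar m p) σ]
  rw [Finset.sum_const, Finset.card_univ, Fintype.card_perm, Fintype.card_fin,
    nsmul_eq_mul]

lemma eval_astar_ne (hp2 : p = 2 * m + 1) :
    eval (astar m p) (P fun _ => (1 : ZMod p)) ≠ 0 := by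
  rw [eval_ne_zero_iff]
  have h := good_one_comp (m := m) hp2 (Equiv.refl _)
  simpa using h

end Main

end PartitionFpAux

/-- Partition of the nonzero elements of `F_p` (p an odd prime) into
pairs with prescribed differences `d i`. -/
theorem partition_Fp_pairs (p : ℕ) (hp : p.Prime) (hodd : Odd p)
    (m : ℕ) (hm : m = (p - 1) / 2)
    (d : Fin m → ZMod p) (hd : ∀ i, d i ≠ 0) :
    ∃ x y : Fin m → ZMod p,
      (∀ i, x i ≠ 0) ∧ (∀ i, y i ≠ 0) ∧
      Function.Injective (Sum.elim x y) ∧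
      ∀ i, y i - x i = d i := by
  classical
  haveI : Fact p.Prime := ⟨hp⟩
  obtain ⟨mm, hmm⟩ := hodd
  have hp2 : p = 2 * m + 1 := by
    have h2 := hp.two_le
    omega
  open PartitionFpAux in
  -- coefficient of the top monomial is the same for all d
  have hcoeff : ∀ e : Fin m → ZMod p,
      coeff (Mexp m p) (P e) = coeff (Mexp m p) (∏ t ∈ S m, lin p t) := by
    intro e
    exact coeff_prod_affine (S m) (lin p) (cst e) hg_lin (Mexp m p)
      (by rw [Mexp_sum, cardS hp2])
  have hdegle : ∀ e : Fin m → ZMod p, (P e).totalDegree ≤ m * (p - 1) := by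
    intro e
    have := totalDegree_P_le (m := m) e
    rwa [cardS hp2] at this
  have hsum1 := sum_eval (m := m) (P (fun _ => (1 : ZMod p))) (hdegle _)
  have hsumd := sum_eval (m := m) (P d) (hdegle d)
  have hval := sum_eval_one (m := m) (p := p) hp2
  have hfac : (m.factorial : ZMod p) ≠ 0 := by
    rw [Ne, ZMod.natCast_eq_zero_iff]
    intro hdvd
    have := (Nat.Prime.dvd_factorial hp).mp hdvd
    omega
  have hv := eval_astar_ne (m := m) hp2
  have hC : coeff (Mexp m p) (P d) ≠ 0 := by
    have h1 : (-1 : ZMod p) ^ m * coeff (Mexp m p) (P (fun _ => (1 : ZMod p))) ≠ 0 := by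
      rw [← hsum1, hval]
      exact mul_ne_zero hfac hv
    have h2 : coeff (Mexp m p) (P (fun _ => (1 : ZMod p))) ≠ 0 := by
      intro h
      rw [h, mul_zero] at h1
      exact h1 rfl
    rw [hcoeff d]
    rw [hcoeff (fun _ => 1)] at h2
    exact h2
  have hS : ∑ a : Fin m → ZMod p, eval a (P d) ≠ 0 := by
    rw [hsumd]
    exact mul_ne_zero (pow_ne_zero _ (neg_ne_zero.mpr one_ne_zero)) hC
  obtain ⟨a, -, ha⟩ := Finset.exists_ne_zero_of_sum_ne_zero hS
  obtain ⟨h1, h2⟩ := (eval_ne_zero_iff d a).mp ha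
  have hmemU : ∀ i j : Fin m, i < j → (i, j) ∈ U m := by
    intro i j h
    simp [U, h]
  have key : ∀ {i j : Fin m}, i < j →
      a i ≠ a j ∧ a i + d i ≠ a j + d j ∧ a i + d i ≠ a j ∧ a i ≠ a j + d j :=
    fun {i j} h => h2 (i, j) (hmemU _ _ h)
  refine ⟨a, fun i => a i + d i, fun i => (h1 i).1, fun i => (h1 i).2, ?_, fun i => by ring⟩
  rintro (i | i) (j | j) h <;>
    simp only [Sum.elim_inl, Sum.elim_inr] at h
  · rcases lt_trichotomy i j with hlt | he | hlt
    · exact absurd h (key hlt).1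
    · exact congrArg Sum.inl he
    · exact absurd h.symm (key hlt).1
  · exfalso
    rcases lt_trichotomy i j with hlt | he | hlt
    · exact (key hlt).2.2.2 h
    · subst he
      exact hd i (left_eq_add.mp h)
    · exact (key hlt).2.2.1 h.symm
  · exfalso
    rcases lt_trichotomy i j with hlt | he | hlt
    · exact (key hlt).2.2.1 h
    · subst he
      exact hd i (add_eq_left.mp h)
    · exact (key hlt).2.2.2 h.symm
  · rcases lt_trichotomy i j with hlt | he | hlt
    · exact absurd h (key hlt).2.1
    · exact congrArg Sum.inr he
    · exact absurd h.symm (key hlt).2.1
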